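/- arXiv:1512.08190 — 4 statements merged into one kernel-verified Lean document; each statement's English description precedes it below -/
import Mathlib

section
/- Let W be a reflexive Banach space and J : W → ℝ a C¹ functional. If (u₀,v₀) is a local minimizer of J restricted to the Nehari manifold N = {(u,v) ∈ W \ {0} : ⟨J'(u,v),(u,v)⟩ = 0}, and if the second derivative of t ↦ J(t·u₀, t·v₀) at t = 1 is nonzero, then (u₀,v₀) is a critical point of J on all of W (i.e. J'(u₀,v₀) = 0). -/
open Filter Set Metric Topology

private lemma curve_hasDerivAt {W : Type*} [NormedAddCommGroup W] [NormedSpace ℝ W]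
    {J : W → ℝ} (hJ : Differentiable ℝ J) (p v : W) (x : ℝ) :
    HasDerivAt (fun x : ℝ => J (p + x • v)) (fderiv ℝ J (p + x • v) v) x := by
  have h1 : HasDerivAt (fun x : ℝ => p + x • v) v x := by
    simpa using ((hasDerivAt_id x).smul_const v).const_add p
  exact (hJ (p + x • v)).hasFDerivAt.comp_hasDerivAt x h1

set_option maxHeartbeats 1000000

/-- Lemma 2.1: a local minimizer of `J` on the Nehari manifold
`N = {w ≠ 0 : ⟨J'(w), w⟩ = 0}` which is nondegenerate along its ray
(the second derivative of `t ↦ J (t • w₀)` at `t = 1` is nonzero)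
is a critical point of `J` on all of `W`. -/
theorem stmt0
    {W : Type*} [NormedAddCommGroup W] [NormedSpace ℝ W] [CompleteSpace W]
    (hrefl : Function.Surjective (NormedSpace.inclusionInDoubleDual ℝ W))
    (J : W → ℝ) (hJ : ContDiff ℝ 1 J)
    (N : Set W)
    (hN : N = {w : W | w ≠ 0 ∧ fderiv ℝ J w w = 0})
    (w₀ : W) (hw₀ : w₀ ∈ N)
    (hmin : IsLocalMinOn J N w₀)
    (hnondeg : deriv (deriv (fun t : ℝ => J (t • w₀))) 1 ≠ 0) :
    fderiv ℝ J w₀ = 0 := by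
  by_contra hne
  rw [hN] at hw₀
  obtain ⟨hw0ne, hww⟩ := hw₀
  have hJd : Differentiable ℝ J := hJ.differentiable one_ne_zero
  have hJc : Continuous fun x => fderiv ℝ J x := hJ.continuous_fderiv one_ne_zero
  -- pick h with f h = 1
  obtain ⟨h₁, hh₁⟩ : ∃ x, fderiv ℝ J w₀ x ≠ 0 := by
    by_contra hc
    push_neg at hc
    exact hne (ContinuousLinearMap.ext fun x => by simpa using hc x)
  set h : W := (fderiv ℝ J w₀ h₁)⁻¹ • h₁ with hhdef
  have hfh : fderiv ℝ J w₀ h = 1 := by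
    rw [hhdef, map_smul, smul_eq_mul, inv_mul_cancel₀ hh₁]
  -- the fiber map φ
  set φ : ℝ → ℝ := fun t => J (t • w₀) with hφdef
  have hφd : ∀ x : ℝ, HasDerivAt φ (fderiv ℝ J (x • w₀) w₀) x := fun x => by
    simpa using curve_hasDerivAt hJd 0 w₀ x
  have hφ' : ∀ x : ℝ, deriv φ x = fderiv ℝ J (x • w₀) w₀ := fun x => (hφd x).deriv
  have hφ'1 : deriv φ 1 = 0 := by rw [hφ' 1, one_smul]; exact hww
  set a : ℝ := deriv (deriv φ) 1 with hadef
  have ha0 : a ≠ 0 := hnondeg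
  have hda : HasDerivAt (deriv φ) a 1 :=
    (differentiableAt_of_deriv_ne_zero hnondeg).hasDerivAt
  -- sign of deriv φ near 1
  have hev : ∀ᶠ t in 𝓝[≠] (1:ℝ), dist (slope (deriv φ) 1 t) a < |a| :=
    (hasDerivAt_iff_tendsto_slope.mp hda) (Metric.ball_mem_nhds a (abs_pos.mpr ha0))
  obtain ⟨ε₀, hε₀, hsgn⟩ : ∃ ε₀ > 0, ∀ t : ℝ, t ≠ 1 → |t - 1| < ε₀ →
      dist (slope (deriv φ) 1 t) a < |a| := by
    rw [eventually_nhdsWithin_iff, Metric.eventually_nhds_iff] at hev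
    obtain ⟨ε₀, hε₀, H⟩ := hev
    exact ⟨ε₀, hε₀, fun t ht1 hlt => H (by simpa [Real.dist_eq] using hlt) ht1⟩
  have key : ∀ t : ℝ, t ≠ 1 → |t - 1| < ε₀ → 0 < (deriv φ t / (t - 1)) * a := by
    intro t ht1 htε
    have h1 := hsgn t ht1 htε
    rw [Real.dist_eq, show slope (deriv φ) 1 t = deriv φ t / (t - 1) by
      rw [slope_def_field, hφ'1, sub_zero]] at h1
    rcases abs_lt.mp h1 with ⟨hl, hr⟩
    rcases ha0.lt_or_gt with hB | hB
    · rw [abs_of_neg hB] at hl hr; nlinarith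
    · rw [abs_of_pos hB] at hl hr; nlinarith
  -- derivative of φ reconstructed from slope
  have keyval : ∀ t : ℝ, t ≠ 1 → deriv φ t = (deriv φ t / (t - 1)) * (t - 1) := by
    intro t ht1
    rw [div_mul_cancel₀ _ (sub_ne_zero.mpr ht1)]
  -- ρ : neighborhood where fderiv J x h > 1/2
  have hcont : Continuous fun x => fderiv ℝ J x h := hJc.clm_apply continuous_const
  obtain ⟨ρ, hρ, hρball⟩ : ∃ ρ > 0, ∀ x : W, ‖x - w₀‖ < ρ → 1/2 < fderiv ℝ J x h := by
    have hev2 : ∀ᶠ x in 𝓝 w₀, 1/2 < fderiv ℝ J x h :=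
      (hcont.tendsto w₀).eventually (lt_mem_nhds (by rw [hfh]; norm_num))
    rw [Metric.eventually_nhds_iff] at hev2
    obtain ⟨ρ, hρ, H⟩ := hev2
    exact ⟨ρ, hρ, fun x hx => H (by rwa [dist_eq_norm])⟩
  -- r : radius of local minimality
  obtain ⟨r, hr, hrball⟩ : ∃ r > 0, ∀ x ∈ N, ‖x - w₀‖ < r → J w₀ ≤ J x := by
    have hmem : {x | J w₀ ≤ J x} ∈ 𝓝[N] w₀ := hmin
    rw [Metric.mem_nhdsWithin_iff] at hmem
    obtain ⟨r, hr, H⟩ := hmem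
    exact ⟨r, hr, fun x hxN hx => H ⟨by rwa [mem_ball, dist_eq_norm], hxN⟩⟩

  have hJcont : Continuous J := hJd.continuous
  -- the constant C and the scale ε
  set C : ℝ := ‖w₀‖ + ‖h‖ + 1 with hCdef
  have hnw : 0 ≤ ‖w₀‖ := norm_nonneg w₀
  have hnh : 0 ≤ ‖h‖ := norm_nonneg h
  have hC1 : 1 ≤ C := by rw [hCdef]; linarith
  have hC0 : 0 < C := by linarith
  have hw₀C : ‖w₀‖ ≤ C := by rw [hCdef]; linarith
  have hhC : ‖h‖ ≤ C := by rw [hCdef]; linarith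
  set m : ℝ := min ε₀ (min 1 (min ρ r)) with hmdef
  have hm0 : 0 < m := lt_min hε₀ (lt_min one_pos (lt_min hρ hr))
  have hmε₀ : m ≤ ε₀ := min_le_left _ _
  have hm1 : m ≤ 1 := le_trans (min_le_right _ _) (min_le_left _ _)
  have hmρ : m ≤ ρ := le_trans (min_le_right _ _) (le_trans (min_le_right _ _) (min_le_left _ _))
  have hmr : m ≤ r := le_trans (min_le_right _ _) (le_trans (min_le_right _ _) (min_le_right _ _))
  set ε : ℝ := m / (2 * C) with hεdef
  have hε0 : 0 < ε := div_pos hm0 (by linarith)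
  have hεm : ε * (2 * C) = m := div_mul_cancel₀ _ (by positivity)
  -- the scale s₁ for the parameter s
  set m' : ℝ := min ‖w₀‖ (min ρ r) with hm'def
  have hw₀pos : 0 < ‖w₀‖ := norm_pos_iff.mpr hw0ne
  have hm'0 : 0 < m' := lt_min hw₀pos (lt_min hρ hr)
  have hm'w : m' ≤ ‖w₀‖ := min_le_left _ _
  have hm'ρ : m' ≤ ρ := le_trans (min_le_right _ _) (min_le_left _ _)
  have hm'r : m' ≤ r := le_trans (min_le_right _ _) (min_le_right _ _)
  set s₁ : ℝ := m' / (8 * C) with hs₁def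
  have hs₁0 : 0 < s₁ := div_pos hm'0 (by linarith)
  have hs₁m : s₁ * (8 * C) = m' := div_mul_cancel₀ _ (by positivity)
  clear_value h φ a C m ε m' s₁
  have hεlin : ε * 1 ≤ ε * C := mul_le_mul_of_nonneg_left hC1 hε0.le
  have hεε₀ : ε < ε₀ := by linarith [hεm, hmε₀, hε₀]
  have hε12 : ε ≤ 1 / 2 := by linarith [hεm, hm1]
  have hεCρ : ε * C ≤ ρ / 2 := by linarith [hεm, hmρ]
  have hεCr : ε * C ≤ r / 2 := by linarith [hεm, hmr]
  -- the mean value estimate along fibers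
  have hMVT : ∀ s : ℝ, s < 0 → |s| < s₁ → ∀ t ∈ Icc (1 - ε) (1 + ε),
      J (t • (w₀ + s • h)) ≤ J (t • w₀) + s / 4 := by
    intro s hs0 hss t ht
    obtain ⟨ht1, ht2⟩ := ht
    have ht0 : 1 / 2 ≤ t := by linarith
    have ht3 : t ≤ 2 := by linarith
    obtain ⟨c, hc, hceq⟩ := exists_hasDerivAt_eq_slope
      (fun σ => J (t • w₀ + σ • (t • h)))
      (fun σ => fderiv ℝ J (t • w₀ + σ • (t • h)) (t • h)) hs0
      (Continuous.continuousOn (by fun_prop))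
      (fun x _ => curve_hasDerivAt hJd _ _ x)
    have hcs : |c| < s₁ := by
      rw [abs_lt]
      exact ⟨by linarith [hc.1, (abs_lt.mp hss).1], by linarith [hc.2]⟩
    have hξ : ‖(t • w₀ + c • (t • h)) - w₀‖ < ρ := by
      have heq : (t • w₀ + c • (t • h)) - w₀ = (t - 1) • w₀ + (c * t) • h := by module
      have habs : |t - 1| ≤ ε := abs_le.mpr ⟨by linarith, by linarith⟩
      have hct : |c * t| ≤ s₁ * 2 := by
        rw [abs_mul]
        have h9 : |t| ≤ 2 := abs_le.mpr ⟨by linarith, ht3⟩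
        exact mul_le_mul hcs.le h9 (abs_nonneg t) hs₁0.le
      calc ‖(t • w₀ + c • (t • h)) - w₀‖ = ‖(t - 1) • w₀ + (c * t) • h‖ := by rw [heq]
        _ ≤ ‖(t - 1) • w₀‖ + ‖(c * t) • h‖ := norm_add_le _ _
        _ = |t - 1| * ‖w₀‖ + |c * t| * ‖h‖ := by
            rw [norm_smul, norm_smul, Real.norm_eq_abs, Real.norm_eq_abs]
        _ ≤ ε * C + (s₁ * 2) * C := by
            have h1 : |t - 1| * ‖w₀‖ ≤ ε * C :=
              mul_le_mul habs hw₀C hnw (by linarith)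
            have h2 : |c * t| * ‖h‖ ≤ (s₁ * 2) * C :=
              mul_le_mul hct hhC hnh (by positivity)
            linarith
        _ < ρ := by linarith [hs₁m, hm'ρ, hεCρ, hρ]
    have hb : 1 / 4 ≤ fderiv ℝ J (t • w₀ + c • (t • h)) (t • h) := by
      have h1 := hρball _ hξ
      rw [map_smul, smul_eq_mul]
      have h2 := mul_le_mul ht0 h1.le (by norm_num) (by linarith)
      linarith
    rw [hceq] at hb
    have hsn : (0:ℝ) < 0 - s := by linarith
    have h2 := (le_div_iff₀ hsn).mp hb
    have e1 : t • w₀ + s • (t • h) = t • (w₀ + s • h) := by module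
    have e2 : t • w₀ + (0:ℝ) • (t • h) = t • w₀ := by module
    simp only [e1, e2] at h2
    linarith
  -- case split on the sign of a
  rcases ha0.lt_or_gt with hA | hA
  · -- a < 0 : t = 1 is a local max of φ along the fiber
    have hder_neg : ∀ c : ℝ, 1 < c → c < 1 + ε → deriv φ c < 0 := by
      intro c h1 h2
      have hc1 : c ≠ 1 := ne_of_gt h1
      have habs : |c - 1| < ε₀ := abs_lt.mpr ⟨by linarith, by linarith⟩
      have hk := key c hc1 habs
      have hq : deriv φ c / (c - 1) < 0 := by
        rcases mul_pos_iff.mp hk with ⟨hq1, hq2⟩ | ⟨hq1, hq2⟩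
        · linarith
        · exact hq1
      rw [keyval c hc1]
      exact mul_neg_of_neg_of_pos hq (by linarith)
    have hder_pos : ∀ c : ℝ, 1 - ε < c → c < 1 → 0 < deriv φ c := by
      intro c h1 h2
      have hc1 : c ≠ 1 := ne_of_lt h2
      have habs : |c - 1| < ε₀ := abs_lt.mpr ⟨by linarith, by linarith⟩
      have hk := key c hc1 habs
      have hq : deriv φ c / (c - 1) < 0 := by
        rcases mul_pos_iff.mp hk with ⟨hq1, hq2⟩ | ⟨hq1, hq2⟩
        · linarith
        · exact hq1
      rw [keyval c hc1]
      exact mul_pos_of_neg_of_neg hq (by linarith)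
    have hφcont : Continuous φ := by rw [hφdef]; fun_prop
    -- φ t ≤ φ 1 on the interval
    have hφle : ∀ t ∈ Icc (1 - ε) (1 + ε), φ t ≤ φ 1 := by
      intro t ht
      obtain ⟨ht1, ht2⟩ := ht
      rcases lt_trichotomy t 1 with h1 | h1 | h1
      · obtain ⟨c, hc, hceq⟩ := exists_hasDerivAt_eq_slope φ
          (fun x => fderiv ℝ J (x • w₀) w₀) h1 hφcont.continuousOn (fun x _ => hφd x)
        have h4 : 0 < deriv φ c := hder_pos c (by linarith [hc.1]) hc.2
        rw [hφ' c, hceq] at h4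
        have hd : (φ 1 - φ t) / (1 - t) * (1 - t) = φ 1 - φ t :=
          div_mul_cancel₀ _ (by linarith)
        have h5 := mul_pos h4 (show (0:ℝ) < 1 - t by linarith)
        rw [hd] at h5
        linarith
      · rw [h1]
      · obtain ⟨c, hc, hceq⟩ := exists_hasDerivAt_eq_slope φ
          (fun x => fderiv ℝ J (x • w₀) w₀) h1 hφcont.continuousOn (fun x _ => hφd x)
        have h4 : deriv φ c < 0 := hder_neg c hc.1 (by linarith [hc.2])
        rw [hφ' c, hceq] at h4
        have hd : (φ t - φ 1) / (t - 1) * (t - 1) = φ t - φ 1 :=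
          div_mul_cancel₀ _ (by linarith)
        have h5 := mul_neg_of_neg_of_pos h4 (show (0:ℝ) < t - 1 by linarith)
        rw [hd] at h5
        linarith
    -- strict endpoint comparisons
    have hpp : φ (1 + ε) < φ 1 := by
      obtain ⟨c, hc, hceq⟩ := exists_hasDerivAt_eq_slope φ
        (fun x => fderiv ℝ J (x • w₀) w₀) (show (1:ℝ) < 1 + ε by linarith)
        hφcont.continuousOn (fun x _ => hφd x)
      have h4 : deriv φ c < 0 := hder_neg c hc.1 hc.2
      rw [hφ' c, hceq] at h4
      have hd : (φ (1 + ε) - φ 1) / (1 + ε - 1) * (1 + ε - 1) = φ (1 + ε) - φ 1 :=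
        div_mul_cancel₀ _ (by linarith)
      have h5 := mul_neg_of_neg_of_pos h4 (show (0:ℝ) < 1 + ε - 1 by linarith)
      rw [hd] at h5
      linarith
    have hpm : φ (1 - ε) < φ 1 := by
      obtain ⟨c, hc, hceq⟩ := exists_hasDerivAt_eq_slope φ
        (fun x => fderiv ℝ J (x • w₀) w₀) (show (1:ℝ) - ε < 1 by linarith)
        hφcont.continuousOn (fun x _ => hφd x)
      have h4 : 0 < deriv φ c := hder_pos c hc.1 hc.2
      rw [hφ' c, hceq] at h4
      have hd : (φ 1 - φ (1 - ε)) / (1 - (1 - ε)) * (1 - (1 - ε)) = φ 1 - φ (1 - ε) :=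
        div_mul_cancel₀ _ (by linarith)
      have h5 := mul_pos h4 (show (0:ℝ) < 1 - (1 - ε) by linarith)
      rw [hd] at h5
      linarith
    -- eventual facts in s
    have hE2 : ∀ᶠ s in 𝓝[<] (0:ℝ), |s| < s₁ := by
      refine Eventually.filter_mono nhdsWithin_le_nhds ?_
      filter_upwards [Metric.ball_mem_nhds (0:ℝ) hs₁0] with s hs
      simpa [Real.dist_eq] using hs
    have hE3 : ∀ᶠ s in 𝓝[<] (0:ℝ),
        J ((1 + ε) • (w₀ + s • h)) < J ((1:ℝ) • (w₀ + s • h)) := by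
      refine Eventually.filter_mono nhdsWithin_le_nhds ?_
      have hco : Continuous fun s : ℝ =>
          J ((1:ℝ) • (w₀ + s • h)) - J ((1 + ε) • (w₀ + s • h)) := by fun_prop
      have h0 : (0:ℝ) < J ((1:ℝ) • (w₀ + (0:ℝ) • h)) - J ((1 + ε) • (w₀ + (0:ℝ) • h)) := by
        simp only [zero_smul, add_zero]
        have := hpp
        rw [hφdef] at this
        simpa using sub_pos.mpr this
      filter_upwards [(hco.tendsto 0).eventually (lt_mem_nhds h0)] with s hs
      linarith
    have hE4 : ∀ᶠ s in 𝓝[<] (0:ℝ),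
        J ((1 - ε) • (w₀ + s • h)) < J ((1:ℝ) • (w₀ + s • h)) := by
      refine Eventually.filter_mono nhdsWithin_le_nhds ?_
      have hco : Continuous fun s : ℝ =>
          J ((1:ℝ) • (w₀ + s • h)) - J ((1 - ε) • (w₀ + s • h)) := by fun_prop
      have h0 : (0:ℝ) < J ((1:ℝ) • (w₀ + (0:ℝ) • h)) - J ((1 - ε) • (w₀ + (0:ℝ) • h)) := by
        simp only [zero_smul, add_zero]
        have := hpm
        rw [hφdef] at this
        simpa using sub_pos.mpr this
      filter_upwards [(hco.tendsto 0).eventually (lt_mem_nhds h0)] with s hs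
      linarith
    have hfalse : ∀ᶠ s in 𝓝[<] (0:ℝ), False := by
      filter_upwards [self_mem_nhdsWithin, hE2, hE3, hE4] with s hs0' hs1 h3 h4
      have hs0 : s < 0 := hs0'
      have hsC : |s| * C < m' / 8 := by
        have h9 : |s| * C < s₁ * C := mul_lt_mul_of_pos_right hs1 hC0
        linarith [hs₁m]
      -- the perturbed point is nonzero
      have hu0 : w₀ + s • h ≠ 0 := by
        intro hq
        have hw : w₀ = -(s • h) := by
          have := hq
          rwa [add_eq_zero_iff_eq_neg] at this
        have h9 : ‖w₀‖ = |s| * ‖h‖ := by rw [hw, norm_neg, norm_smul, Real.norm_eq_abs]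
        have h10 : |s| * ‖h‖ ≤ |s| * C := mul_le_mul_of_nonneg_left hhC (abs_nonneg s)
        linarith [hm'w]
      -- interior maximum along the fiber
      obtain ⟨t_m, htmI, htmax⟩ := isCompact_Icc.exists_isMaxOn
        (⟨1, by constructor <;> linarith⟩ : (Icc (1-ε) (1+ε)).Nonempty)
        (Continuous.continuousOn (show Continuous fun t : ℝ => J (t • (w₀ + s • h)) by fun_prop))
      have h1I : (1:ℝ) ∈ Icc (1 - ε) (1 + ε) := by constructor <;> linarith
      have hge1 : J ((1:ℝ) • (w₀ + s • h)) ≤ J (t_m • (w₀ + s • h)) := htmax h1I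
      have htm1 : 1 - ε < t_m := by
        rcases eq_or_lt_of_le htmI.1 with he | hl
        · exfalso; rw [← he] at hge1; linarith
        · exact hl
      have htm2 : t_m < 1 + ε := by
        rcases eq_or_lt_of_le htmI.2 with he | hl
        · exfalso; rw [he] at hge1; linarith
        · exact hl
      have hloc : IsLocalMax (fun t : ℝ => J (t • (w₀ + s • h))) t_m :=
        htmax.isLocalMax (Icc_mem_nhds htm1 htm2)
      have hDer : HasDerivAt (fun t : ℝ => J (t • (w₀ + s • h)))
          (fderiv ℝ J (t_m • (w₀ + s • h)) (w₀ + s • h)) t_m := by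
        simpa using curve_hasDerivAt hJd 0 (w₀ + s • h) t_m
      have hcrit : fderiv ℝ J (t_m • (w₀ + s • h)) (w₀ + s • h) = 0 := by
        have hd := hloc.deriv_eq_zero
        rwa [hDer.deriv] at hd
      have hwN : t_m • (w₀ + s • h) ∈ N := by
        rw [hN]
        exact ⟨smul_ne_zero (by linarith) hu0, by rw [map_smul, hcrit, smul_zero]⟩
      have hclose : ‖t_m • (w₀ + s • h) - w₀‖ < r := by
        have heq : t_m • (w₀ + s • h) - w₀ = (t_m - 1) • w₀ + (t_m * s) • h := by module
        have habs : |t_m - 1| ≤ ε := abs_le.mpr ⟨by linarith, by linarith⟩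
        have hts : |t_m * s| ≤ 2 * |s| := by
          rw [abs_mul]
          have h5 : |t_m| ≤ 2 := abs_le.mpr ⟨by linarith, by linarith⟩
          exact mul_le_mul_of_nonneg_right h5 (abs_nonneg s)
        calc ‖t_m • (w₀ + s • h) - w₀‖ = ‖(t_m - 1) • w₀ + (t_m * s) • h‖ := by rw [heq]
          _ ≤ ‖(t_m - 1) • w₀‖ + ‖(t_m * s) • h‖ := norm_add_le _ _
          _ = |t_m - 1| * ‖w₀‖ + |t_m * s| * ‖h‖ := by
              rw [norm_smul, norm_smul, Real.norm_eq_abs, Real.norm_eq_abs]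
          _ ≤ ε * C + (2 * |s|) * C := by
              have h5 : |t_m - 1| * ‖w₀‖ ≤ ε * C :=
                mul_le_mul habs hw₀C hnw (by linarith)
              have h6 : |t_m * s| * ‖h‖ ≤ (2 * |s|) * C :=
                mul_le_mul hts hhC hnh (by positivity)
              linarith
          _ < r := by linarith [hsC, hm'r, hεCr, hr]
      have hJw : J (t_m • (w₀ + s • h)) < J w₀ := by
        have h6 := hMVT s hs0 hs1 t_m ⟨htmI.1, htmI.2⟩
        have h7 : φ t_m ≤ φ 1 := hφle t_m ⟨htmI.1, htmI.2⟩
        rw [hφdef] at h7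
        simp only [one_smul] at h7
        calc J (t_m • (w₀ + s • h)) ≤ J (t_m • w₀) + s / 4 := h6
          _ ≤ J w₀ + s / 4 := by simpa using add_le_add_right h7 (s / 4)
          _ < J w₀ := by linarith
      exact absurd (hrball _ hwN hclose) (not_le.mpr hJw)
    obtain ⟨s, hs⟩ := hfalse.exists
    exact hs
  · -- a > 0 : t = 1 is a local min of φ along the fiber
    have hder_pos : ∀ c : ℝ, 1 < c → c < 1 + ε → 0 < deriv φ c := by
      intro c h1 h2
      have hc1 : c ≠ 1 := ne_of_gt h1
      have habs : |c - 1| < ε₀ := abs_lt.mpr ⟨by linarith, by linarith⟩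
      have hk := key c hc1 habs
      have hq : 0 < deriv φ c / (c - 1) := by
        rcases mul_pos_iff.mp hk with ⟨hq1, hq2⟩ | ⟨hq1, hq2⟩
        · exact hq1
        · linarith
      rw [keyval c hc1]
      exact mul_pos hq (by linarith)
    have hder_neg : ∀ c : ℝ, 1 - ε < c → c < 1 → deriv φ c < 0 := by
      intro c h1 h2
      have hc1 : c ≠ 1 := ne_of_lt h2
      have habs : |c - 1| < ε₀ := abs_lt.mpr ⟨by linarith, by linarith⟩
      have hk := key c hc1 habs
      have hq : 0 < deriv φ c / (c - 1) := by
        rcases mul_pos_iff.mp hk with ⟨hq1, hq2⟩ | ⟨hq1, hq2⟩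
        · exact hq1
        · linarith
      rw [keyval c hc1]
      exact mul_neg_of_pos_of_neg hq (by linarith)
    have hφcont : Continuous φ := by rw [hφdef]; fun_prop
    have hpp : φ 1 < φ (1 + ε) := by
      obtain ⟨c, hc, hceq⟩ := exists_hasDerivAt_eq_slope φ
        (fun x => fderiv ℝ J (x • w₀) w₀) (show (1:ℝ) < 1 + ε by linarith)
        hφcont.continuousOn (fun x _ => hφd x)
      have h4 : 0 < deriv φ c := hder_pos c hc.1 hc.2
      rw [hφ' c, hceq] at h4
      have hd : (φ (1 + ε) - φ 1) / (1 + ε - 1) * (1 + ε - 1) = φ (1 + ε) - φ 1 :=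
        div_mul_cancel₀ _ (by linarith)
      have h5 := mul_pos h4 (show (0:ℝ) < 1 + ε - 1 by linarith)
      rw [hd] at h5
      linarith
    have hpm : φ 1 < φ (1 - ε) := by
      obtain ⟨c, hc, hceq⟩ := exists_hasDerivAt_eq_slope φ
        (fun x => fderiv ℝ J (x • w₀) w₀) (show (1:ℝ) - ε < 1 by linarith)
        hφcont.continuousOn (fun x _ => hφd x)
      have h4 : deriv φ c < 0 := hder_neg c hc.1 hc.2
      rw [hφ' c, hceq] at h4
      have hd : (φ 1 - φ (1 - ε)) / (1 - (1 - ε)) * (1 - (1 - ε)) = φ 1 - φ (1 - ε) :=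
        div_mul_cancel₀ _ (by linarith)
      have h5 := mul_neg_of_neg_of_pos h4 (show (0:ℝ) < 1 - (1 - ε) by linarith)
      rw [hd] at h5
      linarith
    have hE2 : ∀ᶠ s in 𝓝[<] (0:ℝ), |s| < s₁ := by
      refine Eventually.filter_mono nhdsWithin_le_nhds ?_
      filter_upwards [Metric.ball_mem_nhds (0:ℝ) hs₁0] with s hs
      simpa [Real.dist_eq] using hs
    have hE3 : ∀ᶠ s in 𝓝[<] (0:ℝ),
        J ((1:ℝ) • (w₀ + s • h)) < J ((1 + ε) • (w₀ + s • h)) := by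
      refine Eventually.filter_mono nhdsWithin_le_nhds ?_
      have hco : Continuous fun s : ℝ =>
          J ((1 + ε) • (w₀ + s • h)) - J ((1:ℝ) • (w₀ + s • h)) := by fun_prop
      have h0 : (0:ℝ) < J ((1 + ε) • (w₀ + (0:ℝ) • h)) - J ((1:ℝ) • (w₀ + (0:ℝ) • h)) := by
        simp only [zero_smul, add_zero]
        have := hpp
        rw [hφdef] at this
        simpa using sub_pos.mpr this
      filter_upwards [(hco.tendsto 0).eventually (lt_mem_nhds h0)] with s hs
      linarith
    have hE4 : ∀ᶠ s in 𝓝[<] (0:ℝ),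
        J ((1:ℝ) • (w₀ + s • h)) < J ((1 - ε) • (w₀ + s • h)) := by
      refine Eventually.filter_mono nhdsWithin_le_nhds ?_
      have hco : Continuous fun s : ℝ =>
          J ((1 - ε) • (w₀ + s • h)) - J ((1:ℝ) • (w₀ + s • h)) := by fun_prop
      have h0 : (0:ℝ) < J ((1 - ε) • (w₀ + (0:ℝ) • h)) - J ((1:ℝ) • (w₀ + (0:ℝ) • h)) := by
        simp only [zero_smul, add_zero]
        have := hpm
        rw [hφdef] at this
        simpa using sub_pos.mpr this
      filter_upwards [(hco.tendsto 0).eventually (lt_mem_nhds h0)] with s hs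
      linarith
    have hfalse : ∀ᶠ s in 𝓝[<] (0:ℝ), False := by
      filter_upwards [self_mem_nhdsWithin, hE2, hE3, hE4] with s hs0' hs1 h3 h4
      have hs0 : s < 0 := hs0'
      have hsC : |s| * C < m' / 8 := by
        have h9 : |s| * C < s₁ * C := mul_lt_mul_of_pos_right hs1 hC0
        linarith [hs₁m]
      have hu0 : w₀ + s • h ≠ 0 := by
        intro hq
        have hw : w₀ = -(s • h) := by
          have := hq
          rwa [add_eq_zero_iff_eq_neg] at this
        have h9 : ‖w₀‖ = |s| * ‖h‖ := by rw [hw, norm_neg, norm_smul, Real.norm_eq_abs]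
        have h10 : |s| * ‖h‖ ≤ |s| * C := mul_le_mul_of_nonneg_left hhC (abs_nonneg s)
        linarith [hm'w]
      obtain ⟨t_m, htmI, htmin'⟩ := isCompact_Icc.exists_isMinOn
        (⟨1, by constructor <;> linarith⟩ : (Icc (1-ε) (1+ε)).Nonempty)
        (Continuous.continuousOn (show Continuous fun t : ℝ => J (t • (w₀ + s • h)) by fun_prop))
      have h1I : (1:ℝ) ∈ Icc (1 - ε) (1 + ε) := by constructor <;> linarith
      have hle1 : J (t_m • (w₀ + s • h)) ≤ J ((1:ℝ) • (w₀ + s • h)) := htmin' h1I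
      have htm1 : 1 - ε < t_m := by
        rcases eq_or_lt_of_le htmI.1 with he | hl
        · exfalso; rw [← he] at hle1; linarith
        · exact hl
      have htm2 : t_m < 1 + ε := by
        rcases eq_or_lt_of_le htmI.2 with he | hl
        · exfalso; rw [he] at hle1; linarith
        · exact hl
      have hloc : IsLocalMin (fun t : ℝ => J (t • (w₀ + s • h))) t_m :=
        htmin'.isLocalMin (Icc_mem_nhds htm1 htm2)
      have hDer : HasDerivAt (fun t : ℝ => J (t • (w₀ + s • h)))
          (fderiv ℝ J (t_m • (w₀ + s • h)) (w₀ + s • h)) t_m := by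
        simpa using curve_hasDerivAt hJd 0 (w₀ + s • h) t_m
      have hcrit : fderiv ℝ J (t_m • (w₀ + s • h)) (w₀ + s • h) = 0 := by
        have hd := hloc.deriv_eq_zero
        rwa [hDer.deriv] at hd
      have hwN : t_m • (w₀ + s • h) ∈ N := by
        rw [hN]
        exact ⟨smul_ne_zero (by linarith) hu0, by rw [map_smul, hcrit, smul_zero]⟩
      have hclose : ‖t_m • (w₀ + s • h) - w₀‖ < r := by
        have heq : t_m • (w₀ + s • h) - w₀ = (t_m - 1) • w₀ + (t_m * s) • h := by module
        have habs : |t_m - 1| ≤ ε := abs_le.mpr ⟨by linarith, by linarith⟩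
        have hts : |t_m * s| ≤ 2 * |s| := by
          rw [abs_mul]
          have h5 : |t_m| ≤ 2 := abs_le.mpr ⟨by linarith, by linarith⟩
          exact mul_le_mul_of_nonneg_right h5 (abs_nonneg s)
        calc ‖t_m • (w₀ + s • h) - w₀‖ = ‖(t_m - 1) • w₀ + (t_m * s) • h‖ := by rw [heq]
          _ ≤ ‖(t_m - 1) • w₀‖ + ‖(t_m * s) • h‖ := norm_add_le _ _
          _ = |t_m - 1| * ‖w₀‖ + |t_m * s| * ‖h‖ := by
              rw [norm_smul, norm_smul, Real.norm_eq_abs, Real.norm_eq_abs]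
          _ ≤ ε * C + (2 * |s|) * C := by
              have h5 : |t_m - 1| * ‖w₀‖ ≤ ε * C :=
                mul_le_mul habs hw₀C hnw (by linarith)
              have h6 : |t_m * s| * ‖h‖ ≤ (2 * |s|) * C :=
                mul_le_mul hts hhC hnh (by positivity)
              linarith
          _ < r := by linarith [hsC, hm'r, hεCr, hr]
      have hJw : J (t_m • (w₀ + s • h)) < J w₀ := by
        have h6 := hMVT s hs0 hs1 1 h1I
        simp only [one_smul] at h6 hle1
        calc J (t_m • (w₀ + s • h)) ≤ J (w₀ + s • h) := hle1
          _ ≤ J w₀ + s / 4 := h6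
          _ < J w₀ := by linarith
      exact absurd (hrball _ hwN hclose) (not_le.mpr hJw)
    obtain ⟨s, hs⟩ := hfalse.exists
    exact hs
end

section
/- Let p > 2 and let M, A, B > 0, and suppose p < r. Define φ(t) = (t^p/p)M − (t^r/r)A − t·B for t > 0. If B is sufficiently small (explicitly, if B < c·M^{(r-1)/(r-p)}·A^{-(p-1)/(r-p)} for a suitable constant c = c(p,r) > 0), then φ' has exactly two positive zeros t₁ < t₂, with φ''(t₁) > 0 and φ''(t₂) < 0, and φ(t₁) < 0. -/
open Real Set

private lemma hasDerivAt_F (p r M A B : ℝ) (hp : p ≠ 0) (hr : r ≠ 0) {t : ℝ} (ht : t ≠ 0) :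
    HasDerivAt (fun t : ℝ => t ^ p / p * M - t ^ r / r * A - t * B)
      (t ^ (p - 1) * M - t ^ (r - 1) * A - B) t := by
  have h1 := ((Real.hasDerivAt_rpow_const (x := t) (p := p) (Or.inl ht)).div_const p).mul_const M
  have h2 := ((Real.hasDerivAt_rpow_const (x := t) (p := r) (Or.inl ht)).div_const r).mul_const A
  have h3 := (hasDerivAt_id t).mul_const B
  refine ((h1.sub h2).sub h3).congr_deriv ?_
  field_simp

private lemma hasDerivAt_G (p r M A B : ℝ) {t : ℝ} (ht : t ≠ 0) :
    HasDerivAt (fun t : ℝ => t ^ (p - 1) * M - t ^ (r - 1) * A - B)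
      ((p - 1) * t ^ (p - 2) * M - (r - 1) * t ^ (r - 2) * A) t := by
  have h1 := (Real.hasDerivAt_rpow_const (x := t) (p := p - 1) (Or.inl ht)).mul_const M
  have h2 := (Real.hasDerivAt_rpow_const (x := t) (p := r - 1) (Or.inl ht)).mul_const A
  have h3 : HasDerivAt (fun _ : ℝ => B) 0 t := hasDerivAt_const t B
  refine ((h1.sub h2).sub h3).congr_deriv ?_
  norm_num
  ring_nf

set_option maxHeartbeats 1000000 in
/-- Corollary 3.2(ii), model form: for `φ(t) = (t^p/p)M − (t^r/r)A − tB`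
with `2 < p < r` and `M, A, B > 0`, if `B` is small enough (below an
explicit threshold `c(p,r)·M^{(r-1)/(r-p)}·A^{-(p-1)/(r-p)}`), then `φ'`
has exactly two positive zeros `t₁ < t₂`, with `φ''(t₁) > 0`,
`φ''(t₂) < 0` and `φ(t₁) < 0`. -/
theorem stmt2 (p r : ℝ) (hp : 2 < p) (hpr : p < r) :
    ∃ c > 0, ∀ M A B : ℝ, 0 < M → 0 < A → 0 < B →
      B < c * M ^ ((r - 1) / (r - p)) * A ^ (-(p - 1) / (r - p)) →
      ∀ φ : ℝ → ℝ, (∀ t, φ t = t ^ p / p * M - t ^ r / r * A - t * B) →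
        ∃ t₁ t₂ : ℝ, 0 < t₁ ∧ t₁ < t₂ ∧
          deriv φ t₁ = 0 ∧ deriv φ t₂ = 0 ∧
          (∀ t > 0, deriv φ t = 0 → t = t₁ ∨ t = t₂) ∧
          0 < iteratedDeriv 2 φ t₁ ∧ iteratedDeriv 2 φ t₂ < 0 ∧
          φ t₁ < 0 := by
  have hq : 0 < r - p := by linarith
  have hp1 : (0:ℝ) < p - 1 := by linarith
  have hr1 : (0:ℝ) < r - 1 := by linarith
  set e : ℝ := (p - 1) / (r - p) with he
  refine ⟨((p - 1) / (r - 1)) ^ e * ((r - p) / (r - 1)), by positivity, ?_⟩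
  intro M A B hM hA hB hBsmall φ hφ
  have hφfun : φ = fun t : ℝ => t ^ p / p * M - t ^ r / r * A - t * B := funext hφ
  subst hφfun
  set G : ℝ → ℝ := fun t => t ^ (p - 1) * M - t ^ (r - 1) * A - B with hGdef
  set X : ℝ := (p - 1) * M / ((r - 1) * A) with hX
  have hXpos : 0 < X := by positivity
  set ts : ℝ := X ^ (1 / (r - p)) with hts
  have htspos : 0 < ts := Real.rpow_pos_of_pos hXpos _
  have htsq : ts ^ (r - p) = X := by
    rw [hts, ← Real.rpow_mul hXpos.le, one_div_mul_cancel hq.ne', Real.rpow_one]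
  have hXA : X * A = (p - 1) * M / (r - 1) := by
    rw [hX]; field_simp
  -- derivative facts
  have hDφ : ∀ t : ℝ, 0 < t → deriv (fun t : ℝ => t ^ p / p * M - t ^ r / r * A - t * B) t = G t :=
    fun t ht => (hasDerivAt_F p r M A B (by linarith) (by linarith) ht.ne').deriv
  have hDφev : ∀ t : ℝ, 0 < t →
      deriv (fun t : ℝ => t ^ p / p * M - t ^ r / r * A - t * B) =ᶠ[nhds t] G := by
    intro t ht
    filter_upwards [isOpen_Ioi.mem_nhds (show t ∈ Ioi (0:ℝ) from ht)] with x hx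
    exact hDφ x hx
  have hDG : ∀ t : ℝ, 0 < t →
      deriv G t = (p - 1) * t ^ (p - 2) * M - (r - 1) * t ^ (r - 2) * A :=
    fun t ht => (hasDerivAt_G p r M A B ht.ne').deriv
  -- continuity of G
  have hGc : Continuous G := by
    have c1 : Continuous fun x : ℝ => x ^ (p - 1) := Real.continuous_rpow_const (by linarith)
    have c2 : Continuous fun x : ℝ => x ^ (r - 1) := Real.continuous_rpow_const (by linarith)
    exact ((c1.mul continuous_const).sub (c2.mul continuous_const)).sub continuous_const
  -- sign of deriv G
  have hDGsign : ∀ t : ℝ, 0 < t →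
      deriv G t = t ^ (p - 2) * ((p - 1) * M - (r - 1) * t ^ (r - p) * A) := by
    intro t ht
    rw [hDG t ht]
    have h : t ^ (r - 2) = t ^ (p - 2) * t ^ (r - p) := by
      rw [← Real.rpow_add ht]; ring_nf
    rw [h]; ring
  have hbrack : ∀ t : ℝ, 0 < t → t ^ (r - p) < X → 0 < deriv G t := by
    intro t ht htX
    rw [hDGsign t ht]
    have h1 : (0:ℝ) < t ^ (p - 2) := Real.rpow_pos_of_pos ht _
    have h2 : (r - 1) * t ^ (r - p) * A < (p - 1) * M := by
      have h := mul_lt_mul_of_pos_left htX (by positivity : (0:ℝ) < (r - 1) * A)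
      rw [hX, mul_div_cancel₀ _ (by positivity : ((r:ℝ) - 1) * A ≠ 0)] at h
      nlinarith
    nlinarith
  have hbrack' : ∀ t : ℝ, 0 < t → X < t ^ (r - p) → deriv G t < 0 := by
    intro t ht htX
    rw [hDGsign t ht]
    have h1 : (0:ℝ) < t ^ (p - 2) := Real.rpow_pos_of_pos ht _
    have h2 : (p - 1) * M < (r - 1) * t ^ (r - p) * A := by
      have h := mul_lt_mul_of_pos_left htX (by positivity : (0:ℝ) < (r - 1) * A)
      rw [hX, mul_div_cancel₀ _ (by positivity : ((r:ℝ) - 1) * A ≠ 0)] at h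
      nlinarith
    nlinarith
  -- monotonicity
  have hmono : StrictMonoOn G (Icc 0 ts) := by
    apply strictMonoOn_of_deriv_pos (convex_Icc 0 ts) hGc.continuousOn
    intro x hx
    rw [interior_Icc] at hx
    exact hbrack x hx.1 (htsq ▸ Real.rpow_lt_rpow hx.1.le hx.2 hq)
  have hanti : StrictAntiOn G (Ici ts) := by
    apply strictAntiOn_of_deriv_neg (convex_Ici ts) hGc.continuousOn
    intro x hx
    rw [interior_Ici] at hx
    exact hbrack' x (htspos.trans hx) (htsq ▸ Real.rpow_lt_rpow htspos.le hx hq)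
  -- value of G at ts: rewrite the threshold
  have htsp1 : ts ^ (p - 1) = ((p - 1) / (r - 1)) ^ e * (M ^ e / A ^ e) := by
    rw [hts, ← Real.rpow_mul hXpos.le]
    have h1 : 1 / (r - p) * (p - 1) = e := by rw [he]; ring
    have h2 : X = ((p - 1) / (r - 1)) * (M / A) := by rw [hX, div_mul_div_comm]
    rw [h1, h2, Real.mul_rpow (by positivity) (by positivity), Real.div_rpow hM.le hA.le]
  have hkey : ((p - 1) / (r - 1)) ^ e * ((r - p) / (r - 1)) * M ^ ((r - 1) / (r - p))
      * A ^ (-(p - 1) / (r - p)) = ts ^ (p - 1) * M - ts ^ (r - 1) * A := by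
    have h1 : ts ^ (r - 1) = ts ^ (p - 1) * X := by
      rw [← htsq, ← Real.rpow_add htspos]; ring_nf
    have h2 : M ^ ((r - 1) / (r - p)) = M ^ e * M := by
      rw [← Real.rpow_add_one hM.ne', he]
      congr 1
      field_simp
      ring
    have h3 : A ^ (-(p - 1) / (r - p)) = (A ^ e)⁻¹ := by
      rw [show -(p - 1) / (r - p) = -e by rw [he]; ring, Real.rpow_neg hA.le]
    have hAe : (0:ℝ) < A ^ e := Real.rpow_pos_of_pos hA _
    rw [h1, h2, h3, htsp1, hX]
    field_simp
    ring
  have hGts : 0 < G ts := by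
    have : B < ts ^ (p - 1) * M - ts ^ (r - 1) * A := by rw [← hkey]; exact hBsmall
    simp only [hGdef]
    linarith
  have hG0 : G 0 = -B := by
    simp only [hGdef, Real.zero_rpow hp1.ne', Real.zero_rpow hr1.ne']
    ring
  -- first zero
  obtain ⟨t₁, ht₁mem, ht₁⟩ : ∃ t₁ ∈ Ioo (0:ℝ) ts, G t₁ = 0 := by
    have h := intermediate_value_Ioo htspos.le hGc.continuousOn
      (show (0:ℝ) ∈ Ioo (G 0) (G ts) by rw [hG0]; exact ⟨by linarith, hGts⟩)
    obtain ⟨t₁, ht₁mem, ht₁⟩ := h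
    exact ⟨t₁, ht₁mem, ht₁⟩
  have ht₁pos : 0 < t₁ := ht₁mem.1
  -- a point T beyond ts where G is negative
  set T : ℝ := max ts ((M / A) ^ (1 / (r - p))) + 1 with hT
  have htsT : ts < T := lt_of_le_of_lt (le_max_left _ _) (lt_add_one _)
  have hTpos : 0 < T := htspos.trans htsT
  have hGT : G T < 0 := by
    have hT0 : (M / A) ^ (1 / (r - p)) < T := lt_of_le_of_lt (le_max_right _ _) (lt_add_one _)
    have hMA : M / A < T ^ (r - p) := by
      have h := Real.rpow_lt_rpow (Real.rpow_nonneg (by positivity) _) hT0 hq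
      rwa [← Real.rpow_mul (by positivity : (0:ℝ) ≤ M / A), one_div_mul_cancel hq.ne',
        Real.rpow_one] at h
    have hM' : M < T ^ (r - p) * A := by
      rw [div_lt_iff₀ hA] at hMA; linarith
    have hTr : T ^ (r - 1) = T ^ (p - 1) * T ^ (r - p) := by
      rw [← Real.rpow_add hTpos]; ring_nf
    have hTp1 : (0:ℝ) < T ^ (p - 1) := Real.rpow_pos_of_pos hTpos _
    simp only [hGdef]
    rw [hTr]
    have h6 := mul_lt_mul_of_pos_left hM' hTp1
    have h7 : T ^ (p - 1) * (T ^ (r - p) * A) = T ^ (p - 1) * T ^ (r - p) * A := by ring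
    linarith
  -- second zero
  obtain ⟨t₂, ht₂mem, ht₂⟩ : ∃ t₂ ∈ Ioo ts T, G t₂ = 0 := by
    have h := intermediate_value_Ioo' htsT.le hGc.continuousOn
      (show (0:ℝ) ∈ Ioo (G T) (G ts) from ⟨hGT, hGts⟩)
    obtain ⟨t₂, ht₂mem, ht₂⟩ := h
    exact ⟨t₂, ht₂mem, ht₂⟩
  have ht₂pos : 0 < ts := htspos
  -- second derivative identity
  have h2d : ∀ t : ℝ, 0 < t →
      iteratedDeriv 2 (fun t : ℝ => t ^ p / p * M - t ^ r / r * A - t * B) t = deriv G t := by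
    intro t ht
    rw [show (2:ℕ) = 1 + 1 from rfl, iteratedDeriv_succ, iteratedDeriv_one]
    exact Filter.EventuallyEq.deriv_eq (hDφev t ht)
  refine ⟨t₁, t₂, ht₁pos, ht₁mem.2.trans ht₂mem.1, ?_, ?_, ?_, ?_, ?_, ?_⟩
  · rw [hDφ t₁ ht₁pos, ht₁]
  · rw [hDφ t₂ (htspos.trans ht₂mem.1), ht₂]
  · intro t ht hdt
    rw [hDφ t ht] at hdt
    rcases le_total t ts with hle | hle
    · left
      exact hmono.injOn ⟨ht.le, hle⟩ ⟨ht₁pos.le, ht₁mem.2.le⟩ (hdt.trans ht₁.symm)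
    · right
      exact hanti.injOn hle ht₂mem.1.le (hdt.trans ht₂.symm)
  · rw [h2d t₁ ht₁pos]
    exact hbrack t₁ ht₁pos (htsq ▸ Real.rpow_lt_rpow ht₁pos.le ht₁mem.2 hq)
  · rw [h2d t₂ (htspos.trans ht₂mem.1)]
    exact hbrack' t₂ (htspos.trans ht₂mem.1) (htsq ▸ Real.rpow_lt_rpow htspos.le ht₂mem.1 hq)
  · -- φ(t₁) < 0
    show t₁ ^ p / p * M - t₁ ^ r / r * A - t₁ * B < 0
    have hpne : (p:ℝ) ≠ 0 := by linarith
    have hrne : (r:ℝ) ≠ 0 := by linarith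
    have hBt : B = t₁ ^ (p - 1) * M - t₁ ^ (r - 1) * A := by
      simp only [hGdef] at ht₁; linarith
    have hp0 : t₁ ^ p = t₁ * t₁ ^ (p - 1) := by
      nth_rewrite 1 [show p = 1 + (p - 1) by ring]
      rw [Real.rpow_add ht₁pos, Real.rpow_one]
    have hr0 : t₁ ^ r = t₁ * t₁ ^ (r - 1) := by
      nth_rewrite 1 [show r = 1 + (r - 1) by ring]
      rw [Real.rpow_add ht₁pos, Real.rpow_one]
    have hrp : t₁ ^ (r - 1) = t₁ ^ (p - 1) * t₁ ^ (r - p) := by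
      rw [← Real.rpow_add ht₁pos]; ring_nf
    have ht1X : t₁ ^ (r - p) < X := htsq ▸ Real.rpow_lt_rpow ht₁pos.le ht₁mem.2 hq
    have hupos : (0:ℝ) < t₁ ^ (p - 1) := Real.rpow_pos_of_pos ht₁pos _
    have hspos : (0:ℝ) < t₁ ^ (r - p) := Real.rpow_pos_of_pos ht₁pos _
    have hsA : t₁ ^ (r - p) * ((r - 1) * A) < (p - 1) * M := by
      have h := mul_lt_mul_of_pos_right ht1X (by positivity : (0:ℝ) < (r - 1) * A)
      rw [hX, div_mul_cancel₀ _ (by positivity : ((r:ℝ) - 1) * A ≠ 0)] at h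
      exact h
    have key : t₁ ^ p / p * M - t₁ ^ r / r * A - t₁ * B
        = t₁ * (t₁ ^ (p - 1) * t₁ ^ (r - p) * A * p * (r - 1)
            - t₁ ^ (p - 1) * M * r * (p - 1)) / (p * r) := by
      rw [hp0, hr0, hBt, hrp]
      field_simp
      ring
    rw [key]
    refine div_neg_of_neg_of_pos (mul_neg_of_pos_of_neg ht₁pos ?_) (by nlinarith)
    nlinarith [mul_lt_mul_of_pos_left hsA (mul_pos hupos (show (0:ℝ) < p by linarith)),
      mul_pos (mul_pos hupos hM) hq]
end

section
/- Let p > 2 and r with p < r < p* where p* = pN/(N−p) (N > p). Let Ω ⊂ ℝ^N be a bounded smooth domain and W = W^{1,p}(Ω) × W^{1,p}(Ω) with norm ‖(u,v)‖^p = ∫_Ω(|∇u|^p + m₁|u|^p) + ∫_Ω(|∇v|^p + m₂|v|^p) where m₁, m₂ ∈ C(Ω̄) are positive. Suppose f satisfies f(x,u,v) ≤ C₁(u^r + v^r) on ∂Ω × ℝ₊² and g satisfies |g(x,u,v)| ≤ C(1 + |u|^p + |v|^p) on Ω. Then for all small enough λ, μ > 0, the functional J(u,v) = (1/p)‖(u,v)‖^p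 − ∫_{∂Ω} f(x,|u|,|v|) − (λ+μ)∫_Ω g(x,|u|,|v|) restricted to the Nehari manifold N = {(u,v) ≠ 0 : ⟨J'(u,v),(u,v)⟩ = 0} is coercive and bounded below. -/
open Real Set

/-- Theorem 2.1, abstract form: `W` stands for the product Sobolev space
`W^{1,p}(Ω) × W^{1,p}(Ω)` with its norm; `F w = ∫_{∂Ω} f(x,|u|,|v|)` is the
boundary term and `G w = ∫_Ω g(x,|u|,|v|)` the source term.  The assumptions
encode (A2) (`F w ≤ (1/r)⟨F'(w),w⟩` and the trace-Sobolev growth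
`⟨F'(w),w⟩ ≤ C₁‖w‖^r`) and (A4) together with the Sobolev embedding
(`|G w| ≤ Cg(1 + ‖w‖^p)`, `|⟨G'(w),w⟩| ≤ Cg(1 + ‖w‖^p)`), and the fiber
identity `⟨J'(w),w⟩ = ‖w‖^p − ⟨F'(w),w⟩ − (λ+μ)⟨G'(w),w⟩`.  For all
sufficiently small `λ, μ > 0`, the functional
`J w = (1/p)‖w‖^p − F w − (λ+μ) G w` is coercive and bounded below on the
Nehari manifold `N = {w ≠ 0 : ⟨J'(w),w⟩ = 0}`. -/
theorem stmt5
    {W : Type*} [NormedAddCommGroup W] [NormedSpace ℝ W]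
    (p r C₁ Cg : ℝ) (hp : 2 < p) (hpr : p < r) (hC₁ : 0 < C₁) (hCg : 0 < Cg)
    (F G : W → ℝ) (hFd : Differentiable ℝ F) (hGd : Differentiable ℝ G)
    (hA2 : ∀ w : W, F w ≤ (1 / r) * fderiv ℝ F w w)
    (hFgrow : ∀ w : W, fderiv ℝ F w w ≤ C₁ * ‖w‖ ^ r)
    (hGgrow : ∀ w : W, |G w| ≤ Cg * (1 + ‖w‖ ^ p))
    (hG'grow : ∀ w : W, |fderiv ℝ G w w| ≤ Cg * (1 + ‖w‖ ^ p)) :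
    ∃ Λ > 0, ∀ lam mu : ℝ, 0 < lam → 0 < mu → lam + mu < Λ →
      ∀ J : W → ℝ, (∀ w, J w = (1 / p) * ‖w‖ ^ p - F w - (lam + mu) * G w) →
      ∀ N : Set W,
        N = {w : W | w ≠ 0 ∧
          ‖w‖ ^ p - fderiv ℝ F w w - (lam + mu) * fderiv ℝ G w w = 0} →
        (∀ C : ℝ, ∃ R : ℝ, ∀ w ∈ N, R ≤ ‖w‖ → C ≤ J w) ∧
        BddBelow (J '' N) := by
  have hp0 : (0:ℝ) < p := by linarith
  have hr0 : (0:ℝ) < r := by linarith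
  set a : ℝ := 1 / p - 1 / r with ha_def
  have ha : 0 < a := by
    have : 1 / r < 1 / p := one_div_lt_one_div_of_lt hp0 hpr
    simp only [ha_def]; linarith
  set b : ℝ := (1 / r + 1) * Cg with hb_def
  have hb : 0 < b := by positivity
  refine ⟨a / (2 * b), by positivity, ?_⟩
  set Λ := a / (2 * b) with hΛ_def
  intro lam mu hlam hmu hlm J hJ N hN
  set s := lam + mu with hs_def
  have hs0 : 0 < s := by positivity
  clear_value a b Λ s
  have hΛa : Λ * b = a / 2 := by
    field_simp [hΛ_def]
    rw [hΛ_def]; field_simp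
  -- key estimate on N
  have key : ∀ w ∈ N, (a / 2) * ‖w‖ ^ p - Λ * b ≤ J w := by
    intro w hw
    rw [hN] at hw
    obtain ⟨-, hcon⟩ := hw
    set t : ℝ := ‖w‖ ^ p with ht_def
    set gw : ℝ := fderiv ℝ G w w with hgw_def
    have hnn : (0:ℝ) ≤ t := Real.rpow_nonneg (norm_nonneg w) p
    have hG1 := abs_le.mp (hGgrow w)
    have hG2 := abs_le.mp (hG'grow w)
    rw [← ht_def] at hG1 hG2
    rw [← hgw_def] at hG2
    clear_value t gw
    have hF : F w ≤ (1 / r) * (t - s * gw) := by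
      have h := hA2 w
      have : fderiv ℝ F w w = t - s * gw := by
        simp only [ht_def, hgw_def] at *; linarith
      rw [this] at h; exact h
    have h3 : s * G w ≤ s * (Cg * (1 + t)) :=
      mul_le_mul_of_nonneg_left hG1.2 hs0.le
    have step1 : 1/r * (s * -(Cg * (1 + t))) ≤ 1/r * (s * gw) :=
      mul_le_mul_of_nonneg_left
        (mul_le_mul_of_nonneg_left (by linarith [hG2.1] : -(Cg * (1 + t)) ≤ gw) hs0.le)
        (by positivity)
    have h1 : a * t - s * b * (1 + t) ≤ J w := by
      calc a * t - s * b * (1 + t)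
          = 1/p * t - (1/r * t - 1/r * (s * -(Cg * (1 + t)))) - s * (Cg * (1 + t)) := by
            rw [ha_def, hb_def]; ring
        _ ≤ 1/p * t - (1/r * t - 1/r * (s * gw)) - s * (Cg * (1 + t)) := by linarith [step1]
        _ = 1/p * t - 1/r * (t - s * gw) - s * (Cg * (1 + t)) := by ring
        _ ≤ 1/p * t - F w - s * G w := by linarith [hF, h3]
        _ = J w := by rw [hJ w, ht_def]
    have hΛb : s * b * (1 + t) ≤ Λ * b * (1 + t) := by
      have h1t : (0:ℝ) ≤ 1 + t := by linarith
      exact mul_le_mul_of_nonneg_right (mul_le_mul_of_nonneg_right hlm.le hb.le) h1t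
    have h4 : Λ * b * (1 + t) = a / 2 + a / 2 * t := by rw [hΛa]; ring
    linarith
  constructor
  · intro C
    set M : ℝ := max (2 * (C + Λ * b) / a) 1 with hM_def
    have hM1 : (1:ℝ) ≤ M := le_max_right _ _
    have hM0 : (0:ℝ) < M := lt_of_lt_of_le one_pos hM1
    refine ⟨M ^ (1/p), ?_⟩
    intro w hw hR
    have hRp : M ≤ ‖w‖ ^ p := by
      have h0 : (0:ℝ) ≤ M ^ (1/p) := Real.rpow_nonneg hM0.le _
      have h := Real.rpow_le_rpow h0 hR hp0.le
      rwa [← Real.rpow_mul hM0.le, one_div, inv_mul_cancel₀ hp0.ne',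
        Real.rpow_one] at h
    have hM2 : 2 * (C + Λ * b) / a ≤ ‖w‖ ^ p := le_trans (le_max_left _ _) hRp
    rw [div_le_iff₀ ha] at hM2
    linarith [key w hw]
  · refine ⟨-(Λ * b), ?_⟩
    rintro x ⟨w, hw, rfl⟩
    have hnn : (0:ℝ) ≤ ‖w‖ ^ p := Real.rpow_nonneg (norm_nonneg w) p
    have := key w hw
    nlinarith [mul_nonneg ha.le hnn]
end

section
/- Let f : ℝ₊² → ℝ be C² with f(0,0) = 0 and suppose for all (u,v) ∈ ℝ₊², with t = 1: f(u,v) ≤ (1/r)(f_u(u,v)u + f_v(u,v)v) ≤ (1/(r(r−1)))(f_{uu}u² + 2f_{uv}uv + f_{vv}v²), where r > 1. Then for all t ≥ 1 and (u,v) ∈ ℝ₊², f(tu, tv) ≥ t^r f(u,v) whenever f(u,v) ≥ 0. -/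
open Real

/-- Consequence of (A2): if `f` is C² with `f(0,0) = 0` and satisfies the
homogeneity-type differential inequality
`f(u,v) ≤ (1/r)(f_u u + f_v v) ≤ (1/(r(r−1)))(f_{uu}u² + 2f_{uv}uv + f_{vv}v²)`
on `ℝ₊²` with `r > 1`, then `f(tu,tv) ≥ t^r f(u,v)` for all `t ≥ 1` and
`(u,v) ∈ ℝ₊²` with `f(u,v) ≥ 0`.  Here `fderiv ℝ f (u,v) (u,v)` is the
first derivative of `t ↦ f(tu,tv)` at `t = 1` and the iterated `fderiv`
is its second derivative. -/
theorem stmt8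
    (r : ℝ) (hr : 1 < r)
    (f : ℝ × ℝ → ℝ) (hf : ContDiff ℝ 2 f) (hf0 : f (0, 0) = 0)
    (hchain : ∀ u v : ℝ, 0 ≤ u → 0 ≤ v →
      f (u, v) ≤ (1 / r) * fderiv ℝ f (u, v) (u, v) ∧
      (1 / r) * fderiv ℝ f (u, v) (u, v) ≤
        (1 / (r * (r - 1))) * fderiv ℝ (fun w => fderiv ℝ f w (u, v)) (u, v) (u, v)) :
    ∀ t ≥ (1 : ℝ), ∀ u v : ℝ, 0 ≤ u → 0 ≤ v → 0 ≤ f (u, v) →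
      t ^ r * f (u, v) ≤ f (t * u, t * v) := by
  intro t ht u v hu hv hfuv
  have hfd : Differentiable ℝ f := hf.differentiable (by norm_num)
  -- derivative of g s = f (s*u, s*v)
  have hd : ∀ s : ℝ, HasDerivAt (fun s => f (s * u, s * v))
      (fderiv ℝ f (s * u, s * v) (u, v)) s := by
    intro s
    have h1 : HasFDerivAt f (fderiv ℝ f (s * u, s * v)) (s * u, s * v) :=
      (hfd (s * u, s * v)).hasFDerivAt
    have h2 : HasDerivAt (fun s : ℝ => (s * u, s * v)) (u, v) s := by
      simpa using ((hasDerivAt_id s).mul_const u).prodMk ((hasDerivAt_id s).mul_const v)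
    exact h1.comp_hasDerivAt s h2
  -- key inequality
  have key : ∀ s : ℝ, 0 < s →
      r * f (s * u, s * v) ≤ s * fderiv ℝ f (s * u, s * v) (u, v) := by
    intro s hs
    have h := (hchain (s * u) (s * v) (by positivity) (by positivity)).1
    have hsm : fderiv ℝ f (s * u, s * v) (s * u, s * v)
        = s * fderiv ℝ f (s * u, s * v) (u, v) := by
      have he : ((s * u, s * v) : ℝ × ℝ) = s • ((u, v) : ℝ × ℝ) := by
        simp [Prod.smul_mk, smul_eq_mul]
      conv_lhs => rw [he]
      rw [map_smul]
      simp [smul_eq_mul]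
    rw [hsm] at h
    have hr0 : 0 < r := lt_trans one_pos hr
    rw [div_mul_eq_mul_div, le_div_iff₀ hr0, one_mul] at h
    linarith [h]
  set φ : ℝ → ℝ := fun s => f (s * u, s * v) * s ^ (-r) with hφ
  have hder : ∀ s : ℝ, 0 < s → HasDerivAt φ
      (fderiv ℝ f (s * u, s * v) (u, v) * s ^ (-r)
        + f (s * u, s * v) * (-r * s ^ (-r - 1))) s := by
    intro s hs
    exact (hd s).mul (Real.hasDerivAt_rpow_const (Or.inl hs.ne'))
  have hder_nonneg : ∀ s : ℝ, 0 < s →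
      0 ≤ fderiv ℝ f (s * u, s * v) (u, v) * s ^ (-r)
        + f (s * u, s * v) * (-r * s ^ (-r - 1)) := by
    intro s hs
    have hk := key s hs
    have hpow : s ^ (-r) = s * s ^ (-r - 1) := by
      rw [show (-r : ℝ) = 1 + (-r - 1) by ring, Real.rpow_add hs, Real.rpow_one]; ring_nf
    have hpos : 0 < s ^ (-r - 1) := Real.rpow_pos_of_pos hs _
    rw [hpow]
    nlinarith [hk, hpos]
  have hmono : MonotoneOn φ (Set.Ici (1 : ℝ)) := by
    apply monotoneOn_of_deriv_nonneg (convex_Ici 1)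
    · intro s hs
      have hs1 : (0:ℝ) < s := lt_of_lt_of_le one_pos hs
      exact ((hder s hs1).continuousAt).continuousWithinAt
    · intro s hs
      rw [interior_Ici] at hs
      exact ((hder s (lt_trans one_pos hs)).differentiableAt).differentiableWithinAt
    · intro s hs
      rw [interior_Ici] at hs
      have hs1 : (0:ℝ) < s := lt_trans one_pos hs
      rw [(hder s hs1).deriv]
      exact hder_nonneg s hs1
  have h1t : φ 1 ≤ φ t := hmono (by simp) (by simpa using ht) ht
  have hφ1 : φ 1 = f (u, v) := by simp [hφ]
  have ht0 : (0:ℝ) < t := lt_of_lt_of_le one_pos ht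
  have htr : (0:ℝ) < t ^ r := Real.rpow_pos_of_pos ht0 _
  have hφt : φ t * t ^ r = f (t * u, t * v) := by
    have : t ^ (-r) * t ^ r = 1 := by
      rw [← Real.rpow_add ht0]; simp
    rw [hφ]
    calc f (t * u, t * v) * t ^ (-r) * t ^ r
        = f (t * u, t * v) * (t ^ (-r) * t ^ r) := by ring
      _ = f (t * u, t * v) := by rw [this, mul_one]
  have := mul_le_mul_of_nonneg_right h1t htr.le
  rw [hφ1, hφt] at this
  linarith [this]
end
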